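/- Let C_S5 be the class of all Kripke models (W,R,⊩) such that W is finite and nonempty and R = W×W. Then C_S5 enjoys 1-IP. -/

import Mathlib

/-- Modal formulas over countably many variables. -/
inductive ModalForm : Type where
  | var : ℕ → ModalForm
  | bot : ModalForm
  | and : ModalForm → ModalForm → ModalForm
  | or : ModalForm → ModalForm → ModalForm
  | not : ModalForm → ModalForm
  | imp : ModalForm → ModalForm → ModalForm
  | box : ModalForm → ModalForm

namespace ModalForm

mutual
  /-- positively occurring variables -/
  def vpos : ModalForm → Finset ℕ
    | var p => {p}
    | bot => ∅
    | and φ ψ => vpos φ ∪ vpos ψ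
    | or φ ψ => vpos φ ∪ vpos ψ
    | not φ => vneg φ
    | imp φ ψ => vneg φ ∪ vpos ψ
    | box φ => vpos φ
  /-- negatively occurring variables -/
  def vneg : ModalForm → Finset ℕ
    | var _ => ∅
    | bot => ∅
    | and φ ψ => vneg φ ∪ vneg ψ
    | or φ ψ => vneg φ ∪ vneg ψ
    | not φ => vpos φ
    | imp φ ψ => vpos φ ∪ vneg ψ
    | box φ => vneg φ
end

/-- Modal depth: maximal nesting of `□`. -/
def depth : ModalForm → ℕ
  | var _ => 0
  | bot => 0
  | and φ ψ => max (depth φ) (depth ψ)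
  | or φ ψ => max (depth φ) (depth ψ)
  | not φ => depth φ
  | imp φ ψ => max (depth φ) (depth ψ)
  | box φ => depth φ + 1

/-- `◇φ := ¬□¬φ` -/
def dia (φ : ModalForm) : ModalForm := not (box (not φ))

/-- `⊤ := ¬⊥` -/
def top : ModalForm := not bot

end ModalForm

/-- An S4 Kripke frame: nonempty set of worlds with a reflexive transitive relation. -/
structure KFrame : Type 1 where
  W : Type
  R : W → W → Prop
  nonempty : Nonempty W
  refl : ∀ x, R x x
  trans : ∀ x y z, R x y → R y z → R x z

/-- A Kripke model: a frame with a valuation. -/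
structure KModel : Type 1 extends KFrame where
  val : W → ℕ → Prop

/-- The model based on frame `F` with valuation `V`. -/
def KFrame.toModel (F : KFrame) (V : F.W → ℕ → Prop) : KModel :=
  { toKFrame := F, val := V }

/-- Satisfaction in a Kripke model. -/
def KModel.Sat (M : KModel) : M.W → ModalForm → Prop
  | w, .var p => M.val w p
  | _, .bot => False
  | w, .and φ ψ => M.Sat w φ ∧ M.Sat w ψ
  | w, .or φ ψ => M.Sat w φ ∨ M.Sat w ψ
  | w, .not φ => ¬ M.Sat w φ
  | w, .imp φ ψ => M.Sat w φ → M.Sat w ψ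
  | w, .box φ => ∀ y, M.R w y → M.Sat y φ

/-- `(M0,w0) →ₙ^{(P⁺,P⁻)} (M1,w1)`: every `(P⁺,P⁻)`-formula of depth ≤ n
satisfied at `(M0,w0)` is satisfied at `(M1,w1)`. -/
def ModalArrow (Pp Pm : Finset ℕ) (n : ℕ) (M0 : KModel) (w0 : M0.W)
    (M1 : KModel) (w1 : M1.W) : Prop :=
  ∀ φ : ModalForm, φ.vpos ⊆ Pp → φ.vneg ⊆ Pm → φ.depth ≤ n →
    M0.Sat w0 φ → M1.Sat w1 φ

/-- p-morphism between frames. -/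
def PMorphism (F G : KFrame) (f : F.W → G.W) : Prop :=
  (∀ x y, F.R x y → G.R (f x) (f y)) ∧
  (∀ x w, G.R (f x) w → ∃ z, F.R x z ∧ f z = w)

/-- The class `C` of Kripke models enjoys `n`-IP. -/
def EnjoysIP (C : Set KModel) (n : ℕ) : Prop :=
  ∀ (Pp Pm : Finset ℕ) (M0 M1 : KModel), M0 ∈ C → M1 ∈ C →
    ∀ (w0 : M0.W) (w1 : M1.W), ModalArrow Pp Pm n M0 w0 M1 w1 →
      ∃ (F : KFrame) (wstar : F.W) (f0 : F.W → M0.W) (f1 : F.W → M1.W),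
        (∀ V : F.W → ℕ → Prop, F.toModel V ∈ C) ∧
        PMorphism F M0.toKFrame f0 ∧
        PMorphism F M1.toKFrame f1 ∧
        f0 wstar = w0 ∧ f1 wstar = w1 ∧
        ∀ x : F.W, ModalArrow Pp Pm 0 M0 (f0 x) M1 (f1 x)

/-- A world is final iff every successor is also a predecessor. -/
def KModel.Final (M : KModel) (w : M.W) : Prop := ∀ y, M.R w y → M.R y w

/-- The cluster of a world. -/
def KModel.cluster (M : KModel) (w : M.W) : Set M.W := {u | M.R w u ∧ M.R u w}

/-- Cluster `C0` of `M0` matches cluster `C1` of `M1`. -/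
def Matches (Pp Pm : Finset ℕ) (M0 M1 : KModel) (C0 : Set M0.W) (C1 : Set M1.W) : Prop :=
  (∀ u0 ∈ C0, ∃ u1 ∈ C1, ModalArrow Pp Pm 0 M0 u0 M1 u1) ∧
  (∀ u1 ∈ C1, ∃ u0 ∈ C0, ModalArrow Pp Pm 0 M0 u0 M1 u1)

/-- `φ` is satisfied at every world of every model in `C`. -/
def ValidOn (C : Set KModel) (φ : ModalForm) : Prop :=
  ∀ M ∈ C, ∀ w : M.W, M.Sat w φ

/-- The class of S5 models: finite nonempty set of worlds with total relation. -/
def C_S5 : Set KModel := {M | Finite M.W ∧ ∀ x y : M.W, M.R x y}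

namespace ModalForm

def bigAnd : List ModalForm → ModalForm
  | [] => .not .bot
  | φ :: l => .and φ (bigAnd l)

def bigOr : List ModalForm → ModalForm
  | [] => .bot
  | φ :: l => .or φ (bigOr l)

lemma sat_bigAnd (M : KModel) (w : M.W) (l : List ModalForm) :
    M.Sat w (bigAnd l) ↔ ∀ φ ∈ l, M.Sat w φ := by
  induction l with
  | nil => simp [bigAnd, KModel.Sat]
  | cons φ l ih => simp [bigAnd, KModel.Sat, ih]

lemma sat_bigOr (M : KModel) (w : M.W) (l : List ModalForm) :
    M.Sat w (bigOr l) ↔ ∃ φ ∈ l, M.Sat w φ := by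
  induction l with
  | nil => simp [bigOr, KModel.Sat]
  | cons φ l ih => simp [bigOr, KModel.Sat, ih]

lemma vpos_bigAnd (l : List ModalForm) (P : Finset ℕ) (h : ∀ φ ∈ l, vpos φ ⊆ P) :
    vpos (bigAnd l) ⊆ P := by
  induction l with
  | nil => simp [bigAnd, vpos, vneg]
  | cons φ l ih =>
    simp only [bigAnd, vpos, Finset.union_subset_iff]
    exact ⟨h φ (by simp), ih fun ψ hψ => h ψ (by simp [hψ])⟩

lemma vneg_bigAnd (l : List ModalForm) (P : Finset ℕ) (h : ∀ φ ∈ l, vneg φ ⊆ P) :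
    vneg (bigAnd l) ⊆ P := by
  induction l with
  | nil => simp [bigAnd, vpos, vneg]
  | cons φ l ih =>
    simp only [bigAnd, vneg, Finset.union_subset_iff]
    exact ⟨h φ (by simp), ih fun ψ hψ => h ψ (by simp [hψ])⟩

lemma vpos_bigOr (l : List ModalForm) (P : Finset ℕ) (h : ∀ φ ∈ l, vpos φ ⊆ P) :
    vpos (bigOr l) ⊆ P := by
  induction l with
  | nil => simp [bigOr, vpos]
  | cons φ l ih =>
    simp only [bigOr, vpos, Finset.union_subset_iff]
    exact ⟨h φ (by simp), ih fun ψ hψ => h ψ (by simp [hψ])⟩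

lemma vneg_bigOr (l : List ModalForm) (P : Finset ℕ) (h : ∀ φ ∈ l, vneg φ ⊆ P) :
    vneg (bigOr l) ⊆ P := by
  induction l with
  | nil => simp [bigOr, vneg]
  | cons φ l ih =>
    simp only [bigOr, vneg, Finset.union_subset_iff]
    exact ⟨h φ (by simp), ih fun ψ hψ => h ψ (by simp [hψ])⟩

lemma depth_bigAnd (l : List ModalForm) (n : ℕ) (h : ∀ φ ∈ l, depth φ ≤ n) :
    depth (bigAnd l) ≤ n := by
  induction l with
  | nil => simp [bigAnd, depth]
  | cons φ l ih =>
    simp only [bigAnd, depth, max_le_iff]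
    exact ⟨h φ (by simp), ih fun ψ hψ => h ψ (by simp [hψ])⟩

lemma depth_bigOr (l : List ModalForm) (n : ℕ) (h : ∀ φ ∈ l, depth φ ≤ n) :
    depth (bigOr l) ≤ n := by
  induction l with
  | nil => simp [bigOr, depth]
  | cons φ l ih =>
    simp only [bigOr, depth, max_le_iff]
    exact ⟨h φ (by simp), ih fun ψ hψ => h ψ (by simp [hψ])⟩

end ModalForm

theorem stmt8 : EnjoysIP C_S5 1 := by
  classical
  intro Pp Pm M0 M1 hM0 hM1 w0 w1 harr
  obtain ⟨hF0, hT0⟩ := hM0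
  obtain ⟨hF1, hT1⟩ := hM1
  have := Fintype.ofFinite M0.W
  have := Fintype.ofFinite M1.W
  -- key lemma A: every world of M0 has a match in M1
  have keyA : ∀ u0 : M0.W, ∃ u1 : M1.W, ModalArrow Pp Pm 0 M0 u0 M1 u1 := by
    intro u0
    by_contra h
    push_neg at h
    have h' : ∀ u1 : M1.W, ∃ φ : ModalForm,
        φ.vpos ⊆ Pp ∧ φ.vneg ⊆ Pm ∧ φ.depth ≤ 0 ∧ M0.Sat u0 φ ∧ ¬ M1.Sat u1 φ := by
      intro u1
      have := h u1
      unfold ModalArrow at this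
      push_neg at this
      obtain ⟨φ, h1, h2, h3, h4, h5⟩ := this
      exact ⟨φ, h1, h2, h3, h4, h5⟩
    choose g hg1 hg2 hg3 hg4 hg5 using h'
    set L := (Finset.univ : Finset M1.W).toList.map g with hL
    set Φ := ModalForm.bigAnd L with hΦ
    have hmem : ∀ ψ ∈ L, ∃ u1, ψ = g u1 := by
      intro ψ hψ
      simp only [hL, List.mem_map] at hψ
      obtain ⟨u1, _, rfl⟩ := hψ
      exact ⟨u1, rfl⟩
    have hsat0 : M0.Sat u0 Φ := by
      rw [hΦ, ModalForm.sat_bigAnd]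
      intro ψ hψ
      obtain ⟨u1, rfl⟩ := hmem ψ hψ
      exact hg4 u1
    have hsat1 : ∀ u1 : M1.W, ¬ M1.Sat u1 Φ := by
      intro u1 hu
      rw [hΦ, ModalForm.sat_bigAnd] at hu
      exact hg5 u1 (hu (g u1) (by simp [hL]))
    have hd : (ModalForm.dia Φ).depth ≤ 1 := by
      simp only [ModalForm.dia, ModalForm.depth]
      have hh : Φ.depth ≤ 0 := ModalForm.depth_bigAnd L 0 (by
        intro ψ hψ; obtain ⟨u1, rfl⟩ := hmem ψ hψ; exact hg3 u1)
      omega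
    have hvp : (ModalForm.dia Φ).vpos ⊆ Pp := by
      simp only [ModalForm.dia, ModalForm.vpos, ModalForm.vneg]
      exact ModalForm.vpos_bigAnd L Pp (by
        intro ψ hψ; obtain ⟨u1, rfl⟩ := hmem ψ hψ; exact hg1 u1)
    have hvm : (ModalForm.dia Φ).vneg ⊆ Pm := by
      simp only [ModalForm.dia, ModalForm.vpos, ModalForm.vneg]
      exact ModalForm.vneg_bigAnd L Pm (by
        intro ψ hψ; obtain ⟨u1, rfl⟩ := hmem ψ hψ; exact hg2 u1)
    have hs0 : M0.Sat w0 (ModalForm.dia Φ) := by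
      simp only [ModalForm.dia, KModel.Sat]
      intro hbox
      exact hbox u0 (hT0 w0 u0) hsat0
    have hs1 := harr _ hvp hvm hd hs0
    simp only [ModalForm.dia, KModel.Sat, not_forall] at hs1
    obtain ⟨y, _, hy⟩ := hs1
    exact hsat1 y (not_not.mp hy)
  -- key lemma B: every world of M1 has a match in M0
  have keyB : ∀ u1 : M1.W, ∃ u0 : M0.W, ModalArrow Pp Pm 0 M0 u0 M1 u1 := by
    intro u1
    by_contra h
    push_neg at h
    have h' : ∀ u0 : M0.W, ∃ φ : ModalForm,
        φ.vpos ⊆ Pp ∧ φ.vneg ⊆ Pm ∧ φ.depth ≤ 0 ∧ M0.Sat u0 φ ∧ ¬ M1.Sat u1 φ := by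
      intro u0
      have := h u0
      unfold ModalArrow at this
      push_neg at this
      obtain ⟨φ, h1, h2, h3, h4, h5⟩ := this
      exact ⟨φ, h1, h2, h3, h4, h5⟩
    choose g hg1 hg2 hg3 hg4 hg5 using h'
    set L := (Finset.univ : Finset M0.W).toList.map g with hL
    set Φ := ModalForm.bigOr L with hΦ
    have hmem : ∀ ψ ∈ L, ∃ u0, ψ = g u0 := by
      intro ψ hψ
      simp only [hL, List.mem_map] at hψ
      obtain ⟨u0, _, rfl⟩ := hψ
      exact ⟨u0, rfl⟩
    have hsat0 : ∀ u0 : M0.W, M0.Sat u0 Φ := by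
      intro u0
      rw [hΦ, ModalForm.sat_bigOr]
      exact ⟨g u0, by simp [hL], hg4 u0⟩
    have hsat1 : ¬ M1.Sat u1 Φ := by
      intro hu
      rw [hΦ, ModalForm.sat_bigOr] at hu
      obtain ⟨ψ, hψ, hs⟩ := hu
      obtain ⟨u0, rfl⟩ := hmem ψ hψ
      exact hg5 u0 hs
    have hd : (ModalForm.box Φ).depth ≤ 1 := by
      simp only [ModalForm.depth]
      have hh : Φ.depth ≤ 0 := ModalForm.depth_bigOr L 0 (by
        intro ψ hψ; obtain ⟨u0, rfl⟩ := hmem ψ hψ; exact hg3 u0)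
      omega
    have hvp : (ModalForm.box Φ).vpos ⊆ Pp := by
      simp only [ModalForm.vpos]
      exact ModalForm.vpos_bigOr L Pp (by
        intro ψ hψ; obtain ⟨u0, rfl⟩ := hmem ψ hψ; exact hg1 u0)
    have hvm : (ModalForm.box Φ).vneg ⊆ Pm := by
      simp only [ModalForm.vneg]
      exact ModalForm.vneg_bigOr L Pm (by
        intro ψ hψ; obtain ⟨u0, rfl⟩ := hmem ψ hψ; exact hg2 u0)
    have hs0 : M0.Sat w0 (ModalForm.box Φ) := by
      simp only [KModel.Sat]
      intro y _
      exact hsat0 y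
    have hs1 := harr _ hvp hvm hd hs0
    exact hsat1 (hs1 u1 (hT1 w1 u1))
  -- the frame
  let Wst := {p : M0.W × M1.W // ModalArrow Pp Pm 0 M0 p.1 M1 p.2}
  have hw0w1 : ModalArrow Pp Pm 0 M0 w0 M1 w1 := by
    intro φ hp hm hd hs
    exact harr φ hp hm (hd.trans (by omega)) hs
  let F : KFrame :=
    { W := Wst
      R := fun _ _ => True
      nonempty := ⟨⟨(w0, w1), hw0w1⟩⟩
      refl := fun _ => trivial
      trans := fun _ _ _ _ _ => trivial }
  refine ⟨F, ⟨(w0, w1), hw0w1⟩, fun x => x.1.1, fun x => x.1.2, ?_, ?_, ?_, rfl, rfl, ?_⟩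
  · intro V
    constructor
    · have : Finite Wst := by
        have : Finite (M0.W × M1.W) := inferInstance
        exact Subtype.finite
      exact this
    · intro x y
      trivial
  · exact ⟨fun x y _ => hT0 _ _, fun x w _ => by
      obtain ⟨u1, hu1⟩ := keyA w
      exact ⟨⟨(w, u1), hu1⟩, trivial, rfl⟩⟩
  · exact ⟨fun x y _ => hT1 _ _, fun x w _ => by
      obtain ⟨u0, hu0⟩ := keyB w
      exact ⟨⟨(u0, w), hu0⟩, trivial, rfl⟩⟩
  · exact fun x => x.2
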